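/- Let w be a word and 𝒫 a Parikh vector. Then at most one abelian run of period 𝒫 starts at each position of w: if (b,h₁,t₁,e₁) and (b,h₂,t₂,e₂) are both abelian runs of period 𝒫 in w (starting at the same position b), then e₁ = e₂. -/

import Mathlib

/-- The Parikh vector of a word `v`: the number of occurrences of each letter. -/
def parikh {α : Type*} [DecidableEq α] (v : List α) : α → ℕ := fun a => v.count a

/-- The norm of a Parikh vector: the sum of its components. -/
def pnorm {α : Type*} [Fintype α] (P : α → ℕ) : ℕ := ∑ a, P a

/-- Non-strict containment of Parikh vectors: `P ⊆ Q`. -/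
def PLe {α : Type*} (P Q : α → ℕ) : Prop := ∀ a, P a ≤ Q a

/-- Strict containment of Parikh vectors: `P ⊂ Q`, i.e. componentwise `≤` and smaller norm. -/
def PLt {α : Type*} [Fintype α] (P Q : α → ℕ) : Prop :=
  (∀ a, P a ≤ Q a) ∧ pnorm P < pnorm Q

/-- The substring `w[i..j]` of `w`, from position `i` to position `j`, both included. -/
def substr {α : Type*} (w : List α) (i j : ℕ) : List α := (w.drop i).take (j + 1 - i)

/-- `(b,h,t,e)` is an occurrence of a substring of `w` with abelian period `P`:
`w[b..e] = u₀u₁⋯u_{k-1}u_k` for some `k ≥ 2`, with `|u₀| = h`, `|u_k| = t`,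
`𝒫_{u_1} = ⋯ = 𝒫_{u_{k-1}} = P`, `𝒫_{u₀} ⊂ P` and `𝒫_{u_k} ⊂ P`. -/
def IsOcc {α : Type*} [Fintype α] [DecidableEq α]
    (w : List α) (P : α → ℕ) (b h t e : ℕ) : Prop :=
  b ≤ e ∧ e < w.length ∧
  ∃ (u0 uk : List α) (us : List (List α)),
    substr w b e = u0 ++ us.flatten ++ uk ∧
    u0.length = h ∧ uk.length = t ∧
    1 ≤ us.length ∧
    (∀ u ∈ us, parikh u = P) ∧
    PLt (parikh u0) P ∧ PLt (parikh uk) P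

/-- An occurrence `(b,h,t,e)` with abelian period `P` is left-maximal if there is no
occurrence `(b-1,h',t',e)` with the same abelian period `P`. -/
def LeftMaximal {α : Type*} [Fintype α] [DecidableEq α]
    (w : List α) (P : α → ℕ) (b h t e : ℕ) : Prop :=
  IsOcc w P b h t e ∧ ∀ b' h' t', b' + 1 = b → ¬ IsOcc w P b' h' t' e

/-- An occurrence `(b,h,t,e)` with abelian period `P` is right-maximal if there is no
occurrence `(b,h',t',e+1)` with the same abelian period `P`. -/
def RightMaximal {α : Type*} [Fintype α] [DecidableEq α]
    (w : List α) (P : α → ℕ) (b h t e : ℕ) : Prop :=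
  IsOcc w P b h t e ∧ ∀ h' t', ¬ IsOcc w P b h' t' (e + 1)

/-- An abelian run of period `P` is a maximal occurrence `(b,h,t,e)` with abelian period `P`
such that `e - b - h - t + 1 ≥ 2|P|`. -/
def IsAbelianRun {α : Type*} [Fintype α] [DecidableEq α]
    (w : List α) (P : α → ℕ) (b h t e : ℕ) : Prop :=
  LeftMaximal w P b h t e ∧ RightMaximal w P b h t e ∧
  b + h + t + 2 * pnorm P ≤ e + 1

lemma pnorm_parikh {α : Type*} [Fintype α] [DecidableEq α] (v : List α) :
    pnorm (parikh v) = v.length := by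
  simp only [pnorm, parikh]
  induction v with
  | nil => simp
  | cons a v ih =>
    simp only [List.count_cons, List.length_cons]
    rw [Finset.sum_add_distrib, ih]
    simp [Finset.sum_ite_eq]

lemma parikh_take_le {α : Type*} [DecidableEq α] (v : List α) (n : ℕ) (a : α) :
    parikh (v.take n) a ≤ parikh v a :=
  (v.take_sublist n).count_le a

lemma PLt_parikh_take {α : Type*} [Fintype α] [DecidableEq α] {P : α → ℕ} {v : List α}
    (hle : ∀ a, parikh v a ≤ P a) (n : ℕ) (hn : (v.take n).length < pnorm P) :
    PLt (parikh (v.take n)) P := by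
  refine ⟨fun a => le_trans (parikh_take_le v n a) (hle a), ?_⟩
  rw [pnorm_parikh]; exact hn

/-- Decomposition of a long-enough prefix of a flatten of `P`-blocks. -/
lemma flatten_take_decomp {α : Type*} [Fintype α] [DecidableEq α] {P : α → ℕ}
    (hP1 : 1 ≤ pnorm P) :
    ∀ (us : List (List α)), (∀ u ∈ us, parikh u = P) → ∀ L, pnorm P ≤ L →
      L ≤ us.flatten.length →
    ∃ (us' : List (List α)) (v : List α), us.flatten.take L = us'.flatten ++ v ∧
      1 ≤ us'.length ∧ (∀ u ∈ us', parikh u = P) ∧ PLt (parikh v) P := by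
  intro us
  induction us with
  | nil => intro _ L h1 h2; simp at h2; omega
  | cons u rest ih =>
    intro hall L hL1 hL2
    have hu : parikh u = P := hall u (by simp)
    have hulen : u.length = pnorm P := by rw [← hu, pnorm_parikh]
    have hflat : (u :: rest).flatten = u ++ rest.flatten := by simp
    have hlen : (u :: rest).flatten.length = u.length + rest.flatten.length := by simp
    have htake : (u :: rest).flatten.take L = u ++ rest.flatten.take (L - u.length) := by
      rw [hflat, List.take_append, List.take_of_length_le (by omega)]
    set L2 := L - u.length with hL2def
    rcases Nat.lt_or_ge L2 (pnorm P) with hc | hc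
    · rcases Nat.eq_zero_or_pos L2 with h0 | h0
      · refine ⟨[u], [], ?_, by simp, by simpa using hu, ?_⟩
        · rw [htake, h0]; simp
        · constructor
          · intro a; simp [parikh]
          · rw [pnorm_parikh]; simp; omega
      · -- cut lands strictly inside the first block of `rest`
        have hrest_len : L2 ≤ rest.flatten.length := by omega
        obtain ⟨u', rest', rfl⟩ : ∃ u' rest', rest = u' :: rest' := by
          cases rest with
          | nil => simp at hrest_len; omega
          | cons x xs => exact ⟨x, xs, rfl⟩
        have hu' : parikh u' = P := hall u' (by simp)
        have hu'len : u'.length = pnorm P := by rw [← hu', pnorm_parikh]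
        have htake2 : (u' :: rest').flatten.take L2 = u'.take L2 := by
          have : (u' :: rest').flatten = u' ++ rest'.flatten := by simp
          rw [this, List.take_append, Nat.sub_eq_zero_of_le (by omega)]
          simp
        refine ⟨[u], u'.take L2, ?_, by simp, by simpa using hu, ?_⟩
        · rw [htake, htake2]; simp
        · refine PLt_parikh_take (fun a => le_of_eq (congrFun hu' a)) L2 ?_
          rw [List.length_take]; omega
    · -- recurse
      have hrest_len : L2 ≤ rest.flatten.length := by omega
      obtain ⟨us', v, hdec, hlen', hall', hlt⟩ :=
        ih (fun u hu => hall u (by simp [hu])) L2 hc hrest_len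
      refine ⟨u :: us', v, ?_, by simp, ?_, hlt⟩
      · rw [htake, hdec]; simp
      · intro x hx
        rcases List.mem_cons.mp hx with rfl | hx
        · exact hu
        · exact hall' x hx

/-- Key lemma: a run cannot end strictly before another occurrence with same start. -/
lemma run_not_lt {α : Type*} [Fintype α] [DecidableEq α]
    (w : List α) (P : α → ℕ) (b h₁ t₁ e₁ h₂ t₂ e₂ : ℕ)
    (hr₁ : IsAbelianRun w P b h₁ t₁ e₁) (hocc₂ : IsOcc w P b h₂ t₂ e₂)
    (hlt : e₁ < e₂) : False := by
  obtain ⟨hleft, ⟨hocc₁, hrmax⟩, hsize⟩ := hr₁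
  obtain ⟨hbe₂, he₂w, u0, uk, us, heq, hh, ht, hus1, husP, hu0, hukP⟩ := hocc₂
  have hbe₁ : b ≤ e₁ := hocc₁.1
  have hP1 : 1 ≤ pnorm P := by
    have := hu0.2; omega
  have hu0len : u0.length < pnorm P := by
    have := hu0.2; rw [pnorm_parikh] at this; exact this
  have huklen : uk.length < pnorm P := by
    have := hukP.2; rw [pnorm_parikh] at this; exact this
  set L := e₁ + 2 - b with hLdef
  have hL : 2 * pnorm P + 1 ≤ L := by omega
  -- the substring up to e₂ and its length
  have hslen : (substr w b e₂).length = e₂ + 1 - b := by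
    simp [substr]; omega
  have hstot : u0.length + us.flatten.length + uk.length = e₂ + 1 - b := by
    have h := congrArg List.length heq
    rw [hslen] at h
    simp only [List.length_append] at h
    omega
  have hLle : L ≤ e₂ + 1 - b := by omega
  -- the substring up to e₁+1 is a prefix
  have hsub : substr w b (e₁ + 1) = (substr w b e₂).take L := by
    simp only [substr, List.take_take]
    congr 1
    omega
  have hsplit : (substr w b e₂).take L = u0 ++ (us.flatten ++ uk).take (L - u0.length) := by
    rw [heq, List.append_assoc, List.take_append,
      List.take_of_length_le (by omega)]
  set L' := L - u0.length with hL'def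
  have hL' : pnorm P + 2 ≤ L' := by omega
  rcases Nat.lt_or_ge us.flatten.length L' with hcase | hcase
  · -- cut lands inside uk
    set L'' := L' - us.flatten.length with hL''def
    have hL''le : L'' ≤ uk.length := by omega
    have htk : (us.flatten ++ uk).take L' = us.flatten ++ uk.take L'' := by
      rw [List.take_append, List.take_of_length_le (by omega)]
    apply hrmax u0.length (uk.take L'').length
    refine ⟨by omega, by omega, u0, uk.take L'', us, ?_, rfl, rfl, hus1, husP, hu0, ?_⟩
    · rw [hsub, hsplit, htk, List.append_assoc]
    · refine PLt_parikh_take (fun a => hukP.1 a) L'' ?_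
      rw [List.length_take]; omega
  · -- cut lands inside the flatten
    have htk : (us.flatten ++ uk).take L' = us.flatten.take L' := by
      rw [List.take_append, Nat.sub_eq_zero_of_le hcase]
      simp
    obtain ⟨us', v, hdec, hlen', hall', hltv⟩ :=
      flatten_take_decomp hP1 us husP L' (by omega) hcase
    apply hrmax u0.length v.length
    refine ⟨by omega, by omega, u0, v, us', ?_, rfl, rfl, hlen', hall', hu0, hltv⟩
    rw [hsub, hsplit, htk, hdec, List.append_assoc]

/-- At most one abelian run of period `P` starts at each position of `w`. -/
theorem abelian_runs_same_start {α : Type*} [Fintype α] [DecidableEq α]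
    (w : List α) (P : α → ℕ) (b h₁ t₁ e₁ h₂ t₂ e₂ : ℕ)
    (hr₁ : IsAbelianRun w P b h₁ t₁ e₁) (hr₂ : IsAbelianRun w P b h₂ t₂ e₂) :
    e₁ = e₂ := by
  rcases lt_trichotomy e₁ e₂ with h | h | h
  · exact absurd (run_not_lt w P b h₁ t₁ e₁ h₂ t₂ e₂ hr₁ hr₂.1.1 h) not_false
  · exact h
  · exact absurd (run_not_lt w P b h₂ t₂ e₂ h₁ t₁ e₁ hr₂ hr₁.1.1 h) not_false
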